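/- The Choi-type map φ on M₃(ℂ) given by a'_{11} = ½(a_{11}+a_{33}), a'_{22} = ½(a_{22}+a_{11}), a'_{33} = ½(a_{33}+a_{22}), a'_{ij} = −½ a_{ij} for i ≠ j, is positive and trace-preserving. -/

import Mathlib

open ComplexOrder

/-- Schur's inequality (t = 1). -/
private theorem schur_aux (x y z : ℝ) (hx : 0 ≤ x) (hy : 0 ≤ y) (hz : 0 ≤ z) :
    x^2*y + x*y^2 + y^2*z + y*z^2 + x^2*z + x*z^2 ≤ x^3+y^3+z^3+3*x*y*z := by
  rcases le_total x y with h1 | h1 <;> rcases le_total y z with h2 | h2 <;>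
    rcases le_total x z with h3 | h3 <;>
    nlinarith [mul_nonneg hx (sq_nonneg (x-y)), mul_nonneg hy (sq_nonneg (x-y)),
      mul_nonneg hz (sq_nonneg (x-y)), mul_nonneg hx (sq_nonneg (y-z)),
      mul_nonneg hy (sq_nonneg (y-z)), mul_nonneg hz (sq_nonneg (y-z)),
      mul_nonneg hx (sq_nonneg (x-z)), mul_nonneg hy (sq_nonneg (x-z)),
      mul_nonneg hz (sq_nonneg (x-z))]

private theorem key_aux (a b c : ℝ) (ha : 0 ≤ a) (hb : 0 ≤ b) (hc : 0 ≤ c) :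
    2*(a^3*b^3 + b^3*c^3 + a^3*c^3) ≤ a^6+b^6+c^6+3*a^2*b^2*c^2 := by
  have h := schur_aux (a^2) (b^2) (c^2) (sq_nonneg a) (sq_nonneg b) (sq_nonneg c)
  nlinarith [mul_nonneg (sq_nonneg (a*b)) (sq_nonneg (a-b)),
    mul_nonneg (sq_nonneg (b*c)) (sq_nonneg (b-c)),
    mul_nonneg (sq_nonneg (a*c)) (sq_nonneg (a-c))]

private theorem cbrt_aux (p : ℝ) (hp : 0 ≤ p) : ∃ a : ℝ, 0 ≤ a ∧ a^3 = p := by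
  refine ⟨p ^ ((1:ℝ)/3), Real.rpow_nonneg hp _, ?_⟩
  rw [← Real.rpow_natCast (p ^ ((1:ℝ)/3)) 3, ← Real.rpow_mul hp]
  norm_num

private theorem amgm3_aux (x y z m : ℝ) (hx : 0 ≤ x) (hy : 0 ≤ y) (hz : 0 ≤ z) (hm : 0 ≤ m)
    (h : m^3 = x*y*z) : 3*m ≤ x+y+z := by
  have g := Real.geom_mean_le_arith_mean3_weighted (by norm_num : (0:ℝ) ≤ 1/3)
    (by norm_num : (0:ℝ) ≤ 1/3) (by norm_num : (0:ℝ) ≤ 1/3) hx hy hz (by norm_num)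
  have hL : x ^ ((1:ℝ)/3) * y ^ ((1:ℝ)/3) * z ^ ((1:ℝ)/3) = m := by
    rw [← Real.mul_rpow hx hy, ← Real.mul_rpow (mul_nonneg hx hy) hz, ← h,
      ← Real.rpow_natCast m 3, ← Real.rpow_mul hm]
    norm_num
  rw [hL] at g
  linarith

private theorem scalar_aux (u0 u1 u2 v0 v1 v2 : ℝ) (hu0 : 0 ≤ u0) (hu1 : 0 ≤ u1)
    (hu2 : 0 ≤ u2) (hv0 : 0 ≤ v0) (hv1 : 0 ≤ v1) (hv2 : 0 ≤ v2) :
    (u0*v0+u1*v1+u2*v2)^2 ≤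
      2*((u0*v0)^2+(u1*v1)^2+(u2*v2)^2) + ((u2*v0)^2+(u0*v1)^2+(u1*v2)^2) := by
  obtain ⟨a, ha, ha3⟩ := cbrt_aux (u0*v0) (mul_nonneg hu0 hv0)
  obtain ⟨b, hb, hb3⟩ := cbrt_aux (u1*v1) (mul_nonneg hu1 hv1)
  obtain ⟨c, hc, hc3⟩ := cbrt_aux (u2*v2) (mul_nonneg hu2 hv2)
  have hprod : ((a*b*c)^2)^3 = (u2*v0)^2*(u0*v1)^2*(u1*v2)^2 := by
    have h1 : (a*b*c)^3 = (u0*v0)*((u1*v1)*(u2*v2)) := by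
      rw [← ha3, ← hb3, ← hc3]; ring
    calc ((a*b*c)^2)^3 = ((a*b*c)^3)^2 := by ring
      _ = ((u0*v0)*((u1*v1)*(u2*v2)))^2 := by rw [h1]
      _ = (u2*v0)^2*(u0*v1)^2*(u1*v2)^2 := by ring
  have hA := amgm3_aux ((u2*v0)^2) ((u0*v1)^2) ((u1*v2)^2) ((a*b*c)^2)
    (sq_nonneg _) (sq_nonneg _) (sq_nonneg _) (sq_nonneg _) hprod
  have hB : 2*((u0*v0)*(u1*v1) + (u1*v1)*(u2*v2) + (u0*v0)*(u2*v2)) ≤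
      (u0*v0)^2+(u1*v1)^2+(u2*v2)^2 + 3*(a*b*c)^2 := by
    rw [← ha3, ← hb3, ← hc3]
    linarith [key_aux a b c ha hb hc]
  nlinarith [hA, hB]

private theorem cplx_key (b0 b1 b2 x0 x1 x2 : ℂ) :
    Complex.normSq (b0*x0+b1*x1+b2*x2) ≤
      2*(Complex.normSq (b0*x0) + Complex.normSq (b1*x1) + Complex.normSq (b2*x2))
      + (Complex.normSq b2 * Complex.normSq x0 + Complex.normSq b0 * Complex.normSq x1
        + Complex.normSq b1 * Complex.normSq x2) := by
  have habs : ‖b0*x0+b1*x1+b2*x2‖ ≤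
      ‖b0*x0‖ + ‖b1*x1‖ + ‖b2*x2‖ := by
    calc ‖b0*x0+b1*x1+b2*x2‖ ≤ ‖b0*x0+b1*x1‖ + ‖b2*x2‖ :=
          norm_add_le _ _
      _ ≤ ‖b0*x0‖ + ‖b1*x1‖ + ‖b2*x2‖ := by
          linarith [norm_add_le (b0*x0) (b1*x1)]
  have h2 : Complex.normSq (b0*x0+b1*x1+b2*x2) ≤
      (‖b0*x0‖ + ‖b1*x1‖ + ‖b2*x2‖)^2 := by
    rw [← Complex.sq_norm]
    exact pow_le_pow_left₀ (norm_nonneg _) habs 2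
  have h := scalar_aux (‖b0‖) (‖b1‖) (‖b2‖)
    (‖x0‖) (‖x1‖) (‖x2‖)
    (norm_nonneg _) (norm_nonneg _) (norm_nonneg _)
    (norm_nonneg _) (norm_nonneg _) (norm_nonneg _)
  have e : ∀ z w : ℂ, (‖z‖ * ‖w‖)^2 = Complex.normSq z * Complex.normSq w := by
    intro z w; rw [mul_pow, Complex.sq_norm, Complex.sq_norm]
  simp only [map_mul, norm_mul] at h2 ⊢
  rw [e, e, e, e, e, e] at h
  nlinarith [h, h2]

/-- The Choi-type map on `M₃(ℂ)`: `a'_{11} = ½(a_{11}+a_{33})`, `a'_{22} = ½(a_{22}+a_{11})`,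
`a'_{33} = ½(a_{33}+a_{22})`, `a'_{ij} = −½ a_{ij}` for `i ≠ j`. -/
noncomputable def choiMap (a : Matrix (Fin 3) (Fin 3) ℂ) : Matrix (Fin 3) (Fin 3) ℂ :=
  Matrix.of fun i j =>
    if i = j then (1 / 2 : ℂ) * (a i i + a (i - 1) (i - 1))
    else -(1 / 2 : ℂ) * a i j

private theorem choi_herm (M : Matrix (Fin 3) (Fin 3) ℂ) (hM : M.IsHermitian) :
    (choiMap M).IsHermitian := by
  have key : ∀ i j, star (M i j) = M j i := by
    intro i j
    exact hM.apply j i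
  ext i j
  rw [Matrix.conjTranspose_apply]
  rcases eq_or_ne i j with h | h
  · subst h
    simp only [choiMap, Matrix.of_apply, if_pos rfl, if_true, Complex.star_def, _root_.map_mul,
      _root_.map_add, map_div₀, _root_.map_one, map_ofNat]
    rw [show (starRingEnd ℂ) (M i i) = M i i from key i i,
      show (starRingEnd ℂ) (M (i-1) (i-1)) = M (i-1) (i-1) from key _ _]
  · simp only [choiMap, Matrix.of_apply, if_neg h, if_neg (Ne.symm h), Complex.star_def,
      _root_.map_mul, map_neg, map_div₀, _root_.map_one, map_ofNat]
    rw [show (starRingEnd ℂ) (M j i) = M i j from key j i]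

open Matrix in
private theorem quad_form (B : Matrix (Fin 3) (Fin 3) ℂ) (x : Fin 3 → ℂ) :
    dotProduct (star x) (choiMap (Bᴴ * B) *ᵥ x) =
      (((2*(Complex.normSq (B 0 0 * x 0) + Complex.normSq (B 0 1 * x 1) + Complex.normSq (B 0 2 * x 2))
          + (Complex.normSq (B 0 2) * Complex.normSq (x 0) + Complex.normSq (B 0 0) * Complex.normSq (x 1)
            + Complex.normSq (B 0 1) * Complex.normSq (x 2))
          - Complex.normSq (B 0 0 * x 0 + B 0 1 * x 1 + B 0 2 * x 2))
        + (2*(Complex.normSq (B 1 0 * x 0) + Complex.normSq (B 1 1 * x 1) + Complex.normSq (B 1 2 * x 2))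
          + (Complex.normSq (B 1 2) * Complex.normSq (x 0) + Complex.normSq (B 1 0) * Complex.normSq (x 1)
            + Complex.normSq (B 1 1) * Complex.normSq (x 2))
          - Complex.normSq (B 1 0 * x 0 + B 1 1 * x 1 + B 1 2 * x 2))
        + (2*(Complex.normSq (B 2 0 * x 0) + Complex.normSq (B 2 1 * x 1) + Complex.normSq (B 2 2 * x 2))
          + (Complex.normSq (B 2 2) * Complex.normSq (x 0) + Complex.normSq (B 2 0) * Complex.normSq (x 1)
            + Complex.normSq (B 2 1) * Complex.normSq (x 2))
          - Complex.normSq (B 2 0 * x 0 + B 2 1 * x 1 + B 2 2 * x 2))) * (1/2) : ℝ) := by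
  have h0 : (0:Fin 3) - 1 = 2 := rfl
  have h1 : (1:Fin 3) - 1 = 0 := rfl
  have h2 : (2:Fin 3) - 1 = 1 := rfl
  simp only [dotProduct, Matrix.mulVec, choiMap, Matrix.mul_apply,
    Matrix.conjTranspose_apply, Fin.sum_univ_three, Matrix.of_apply, h0, h1, h2,
    Pi.star_apply]
  norm_num [Fin.ext_iff]
  simp only [← Complex.mul_conj, _root_.map_add, _root_.map_mul, Complex.star_def]
  ring

theorem stmt_11 :
    (∀ a : Matrix (Fin 3) (Fin 3) ℂ, Matrix.trace (choiMap a) = Matrix.trace a) ∧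
    (∀ a : Matrix (Fin 3) (Fin 3) ℂ, a.PosSemidef → (choiMap a).PosSemidef) := by
  constructor
  · intro a
    have h0 : (0:Fin 3) - 1 = 2 := rfl
    have h1 : (1:Fin 3) - 1 = 0 := rfl
    have h2 : (2:Fin 3) - 1 = 1 := rfl
    simp only [Matrix.trace, Matrix.diag, choiMap, Matrix.of_apply, if_pos rfl,
      Fin.sum_univ_three, h0, h1, h2, if_true]
    ring
  · intro a ha
    have hB : ∃ B : Matrix (Fin 3) (Fin 3) ℂ, a = Matrix.conjTranspose B * B := by
      open scoped MatrixOrder in exact CStarAlgebra.nonneg_iff_eq_star_mul_self.mp ha.nonneg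
    obtain ⟨B, rfl⟩ := hB
    refine Matrix.PosSemidef.of_dotProduct_mulVec_nonneg
      (choi_herm _ (Matrix.isHermitian_conjTranspose_mul_self B)) (fun x => ?_)
    rw [quad_form B x, Complex.zero_le_real]
    have k0 := cplx_key (B 0 0) (B 0 1) (B 0 2) (x 0) (x 1) (x 2)
    have k1 := cplx_key (B 1 0) (B 1 1) (B 1 2) (x 0) (x 1) (x 2)
    have k2 := cplx_key (B 2 0) (B 2 1) (B 2 2) (x 0) (x 1) (x 2)
    nlinarith [k0, k1, k2]
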